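/- For each t = 0,…,T−1, one has H_t(S_t) ≤ inf_{z_j ∈ Z_θ} H_t(z_j); that is, the grid point S_t minimizes H_t over the whole grid Z_θ. -/

import Mathlib

open MeasureTheory Filter Set

open Set

lemma slope2 {φ : ℝ → ℝ} (hφ : ConvexOn ℝ Set.univ φ) {x y z : ℝ}
    (h1 : x < y) (h2 : y ≤ z) :
    (z - y) * (φ y - φ x) ≤ (y - x) * (φ z - φ y) := by
  rcases eq_or_lt_of_le h2 with rfl | h2
  · simp
  · have hs := hφ.slope_mono_adjacent (Set.mem_univ x) (Set.mem_univ z) h1 h2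
    rw [div_le_div_iff₀ (by linarith) (by linarith)] at hs
    nlinarith

lemma convex_min_left {φ : ℝ → ℝ} (hφ : ConvexOn ℝ Set.univ φ) {μ : ℝ}
    (hmin : ∀ w, φ μ ≤ φ w) {x y : ℝ} (hxy : x ≤ y) (hyμ : y ≤ μ) : φ y ≤ φ x := by
  rcases eq_or_lt_of_le hxy with rfl | hxy
  · exact le_refl _
  rcases eq_or_lt_of_le hyμ with rfl | hyμ
  · exact hmin x
  have := slope2 hφ hxy hyμ.le
  nlinarith [hmin y, hmin x]

lemma convex_min_right {φ : ℝ → ℝ} (hφ : ConvexOn ℝ Set.univ φ) {μ : ℝ}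
    (hmin : ∀ w, φ μ ≤ φ w) {x y : ℝ} (hμx : μ ≤ x) (hxy : x ≤ y) : φ x ≤ φ y := by
  rcases eq_or_lt_of_le hxy with rfl | hxy
  · exact le_refl _
  rcases eq_or_lt_of_le hμx with rfl | hμx
  · exact hmin y
  have := slope2 hφ hμx hxy.le
  nlinarith [hmin x]

def KcOn (θ KK : ℝ) (h : ℝ → ℝ) : Prop :=
  ∀ a b c : ℤ, a < b → b ≤ c →
    ((c : ℝ) - b) * (h ((b : ℝ) * θ) - h ((a : ℝ) * θ)) ≤
      ((b : ℝ) - a) * (KK + h ((c : ℝ) * θ) - h ((b : ℝ) * θ))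

lemma KcOn_of_convex {θ KK : ℝ} (hθ : 0 < θ) (hK : 0 ≤ KK) {φ : ℝ → ℝ}
    (hφ : ConvexOn ℝ Set.univ φ) : KcOn θ KK φ := by
  intro a b c hab hbc
  have hab' : (a : ℝ) * θ < (b : ℝ) * θ := by
    have : (a : ℝ) < b := by exact_mod_cast hab
    nlinarith
  have hbc' : (b : ℝ) * θ ≤ (c : ℝ) * θ := by
    have : (b : ℝ) ≤ c := by exact_mod_cast hbc
    nlinarith
  have h := slope2 hφ hab' hbc'
  have hba : (0:ℝ) ≤ (b:ℝ) - a := by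
    have : (a : ℝ) < b := by exact_mod_cast hab
    linarith
  nlinarith

lemma KcOn_V {θ KK : ℝ} (hθ : 0 < θ) (hK : 0 ≤ KK) {h v : ℝ → ℝ}
    (Hk : KcOn θ KK h) (sidx Sidx : ℤ) (hsS : sidx ≤ Sidx)
    (hmin : ∀ j : ℤ, h ((Sidx : ℝ) * θ) ≤ h ((j : ℝ) * θ))
    (hsP : h ((sidx : ℝ) * θ) ≤ h ((Sidx : ℝ) * θ) + KK)
    (hv : ∀ j : ℤ, v ((j : ℝ) * θ) =
      if (j : ℝ) * θ < (sidx : ℝ) * θ then h ((Sidx : ℝ) * θ) + KK else h ((j : ℝ) * θ)) :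
    KcOn θ KK v := by
  have hlt : ∀ j : ℤ, ((j : ℝ) * θ < (sidx : ℝ) * θ) ↔ j < sidx := by
    intro j; rw [mul_lt_mul_iff_of_pos_right hθ, Int.cast_lt]
  have hva : ∀ j : ℤ, j < sidx → v ((j : ℝ) * θ) = h ((Sidx : ℝ) * θ) + KK := by
    intro j hj; rw [hv j, if_pos ((hlt j).2 hj)]
  have hvb : ∀ j : ℤ, sidx ≤ j → v ((j : ℝ) * θ) = h ((j : ℝ) * θ) := by
    intro j hj; rw [hv j, if_neg (by rw [hlt]; omega)]
  intro a b c hab hbc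
  have hba : (0:ℝ) < (b : ℝ) - a := by
    have : (a : ℝ) < b := by exact_mod_cast hab
    linarith
  have hcb : (0:ℝ) ≤ (c : ℝ) - b := by
    have : (b : ℝ) ≤ c := by exact_mod_cast hbc
    linarith
  rcases lt_or_ge c sidx with hc | hc
  · rw [hva a (by omega), hva b (by omega), hva c hc]
    nlinarith
  rcases lt_or_ge b sidx with hb | hb
  · rw [hva a (by omega), hva b hb, hvb c hc]
    have := hmin c
    nlinarith
  rcases lt_or_ge a sidx with ha | ha
  · rw [hva a ha, hvb b hb, hvb c (by omega)]
    rcases eq_or_lt_of_le hbc with rfl | hbc'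
    · simp only [sub_self, zero_mul]
      nlinarith
    have hcb' : (0:ℝ) < (c : ℝ) - b := by
      have : (b : ℝ) < c := by exact_mod_cast hbc'
      linarith
    rcases le_or_gt (h ((b : ℝ) * θ)) (h ((Sidx : ℝ) * θ) + KK) with hble | hbgt
    · have := hmin c
      nlinarith
    · have hsb : sidx < b := by
        rcases eq_or_lt_of_le hb with rfl | h'
        · exact absurd hsP (by linarith)
        · omega
      have hh := Hk sidx b c hsb hbc
      have hsb' : (0:ℝ) < (b : ℝ) - sidx := by
        have : (sidx : ℝ) < b := by exact_mod_cast hsb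
        linarith
      have has' : (a : ℝ) + 1 ≤ sidx := by exact_mod_cast ha
      have h2 : 0 ≤ KK + h ((c : ℝ) * θ) - h ((b : ℝ) * θ) := by nlinarith
      nlinarith
  · rw [hvb a ha, hvb b hb, hvb c (by omega)]
    exact Hk a b c hab hbc

lemma quasi_V {θ KK : ℝ} (hθ : 0 < θ) (hK : 0 ≤ KK) {h v : ℝ → ℝ}
    (Hk : KcOn θ KK h) (sidx Sidx : ℤ) (hsS : sidx ≤ Sidx)
    (hmin : ∀ j : ℤ, h ((Sidx : ℝ) * θ) ≤ h ((j : ℝ) * θ))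
    (hsP : h ((sidx : ℝ) * θ) ≤ h ((Sidx : ℝ) * θ) + KK)
    (hv : ∀ j : ℤ, v ((j : ℝ) * θ) =
      if (j : ℝ) * θ < (sidx : ℝ) * θ then h ((Sidx : ℝ) * θ) + KK else h ((j : ℝ) * θ)) :
    ∀ a b : ℤ, a ≤ b → v ((a : ℝ) * θ) ≤ v ((b : ℝ) * θ) + KK := by
  have hlt : ∀ j : ℤ, ((j : ℝ) * θ < (sidx : ℝ) * θ) ↔ j < sidx := by
    intro j; rw [mul_lt_mul_iff_of_pos_right hθ, Int.cast_lt]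
  have hva : ∀ j : ℤ, j < sidx → v ((j : ℝ) * θ) = h ((Sidx : ℝ) * θ) + KK := by
    intro j hj; rw [hv j, if_pos ((hlt j).2 hj)]
  have hvb : ∀ j : ℤ, sidx ≤ j → v ((j : ℝ) * θ) = h ((j : ℝ) * θ) := by
    intro j hj; rw [hv j, if_neg (by rw [hlt]; omega)]
  have hge : ∀ j : ℤ, h ((Sidx : ℝ) * θ) ≤ v ((j : ℝ) * θ) := by
    intro j
    rcases lt_or_ge j sidx with hj | hj
    · rw [hva j hj]; linarith
    · rw [hvb j hj]; exact hmin j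
  intro a b hab
  rcases lt_or_ge a sidx with ha | ha
  · rw [hva a ha]; have := hge b; linarith
  · rw [hvb a ha, hvb b (by omega)]
    rcases lt_or_ge a Sidx with haS | haS
    · -- show h a ≤ h S + KK
      have key : h ((a : ℝ) * θ) ≤ h ((Sidx : ℝ) * θ) + KK := by
        rcases eq_or_lt_of_le ha with rfl | ha'
        · exact hsP
        · by_contra hcon
          push_neg at hcon
          have hh := Hk sidx a Sidx ha' (by omega)
          have h1 : (0:ℝ) < (Sidx : ℝ) - a := by
            have : (a : ℝ) < Sidx := by exact_mod_cast haS
            linarith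
          have h2 : (0:ℝ) < (a : ℝ) - sidx := by
            have : (sidx : ℝ) < a := by exact_mod_cast ha'
            linarith
          nlinarith
      have := hmin b; linarith
    · rcases eq_or_lt_of_le hab with rfl | hab'
      · linarith
      rcases eq_or_lt_of_le haS with rfl | haS'
      · have := hmin b; linarith
      · have hh := Hk Sidx a b haS' (le_of_lt hab')
        have h1 : (0:ℝ) < (b : ℝ) - a := by
          have : (a : ℝ) < b := by exact_mod_cast hab'
          linarith
        have h2 : (0:ℝ) < (a : ℝ) - Sidx := by
          have : (Sidx : ℝ) < a := by exact_mod_cast haS'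
          linarith
        have := hmin a
        nlinarith

lemma KcOn_V_base {θ KK : ℝ} (hθ : 0 < θ) (hK : 0 ≤ KK) {φ v : ℝ → ℝ}
    (hφ : ConvexOn ℝ Set.univ φ) (μ sr : ℝ)
    (hmin : ∀ w, φ μ ≤ φ w) (hsμ : sr ≤ μ) (hs : φ sr = φ μ + KK)
    (hv : ∀ x : ℝ, v x = if x < sr then φ μ + KK else φ x) :
    KcOn θ KK v := by
  intro a b c hab hbc
  have hba : (0:ℝ) < (b : ℝ) - a := by
    have h1 : (a : ℝ) < b := by exact_mod_cast hab
    linarith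
  have hcb : (0:ℝ) ≤ (c : ℝ) - b := by
    have h1 : (b : ℝ) ≤ c := by exact_mod_cast hbc
    linarith
  have hgab : (a : ℝ) * θ < (b : ℝ) * θ := by nlinarith
  have hgbc : (b : ℝ) * θ ≤ (c : ℝ) * θ := by nlinarith
  rcases lt_or_ge ((c : ℝ) * θ) sr with hc | hc
  · rw [hv, hv, hv, if_pos hc, if_pos (lt_of_le_of_lt hgbc hc), if_pos (by linarith)]
    have l1 : ((c:ℝ)-b)*((φ μ + KK) - (φ μ + KK)) = 0 := by ring
    have l2 : ((b:ℝ)-a)*(KK + (φ μ + KK) - (φ μ + KK)) = ((b:ℝ)-a)*KK := by ring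
    have l3 : 0 ≤ ((b:ℝ)-a)*KK := mul_nonneg hba.le hK
    linarith
  rcases lt_or_ge ((b : ℝ) * θ) sr with hb | hb
  · rw [hv, hv, hv, if_pos hb, if_pos (by linarith), if_neg (not_lt.2 hc)]
    have l1 : ((c:ℝ)-b)*((φ μ + KK) - (φ μ + KK)) = 0 := by ring
    have l2 : 0 ≤ ((b:ℝ)-a)*(KK + φ ((c:ℝ)*θ) - (φ μ + KK)) :=
      mul_nonneg hba.le (by linarith [hmin ((c:ℝ)*θ)])
    linarith
  rcases lt_or_ge ((a : ℝ) * θ) sr with ha | ha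
  · rw [hv, hv, hv, if_pos ha, if_neg (not_lt.2 hb), if_neg (not_lt.2 hc)]
    rcases eq_or_lt_of_le hgbc with heq | hbc'
    · have hbc2 : (b : ℤ) = c := by
        have h1 : (b:ℝ) = c := mul_right_cancel₀ hθ.ne' heq
        exact_mod_cast h1
      subst hbc2
      have l1 : ((b:ℝ)-b)*(φ ((b:ℝ)*θ) - (φ μ + KK)) = 0 := by ring
      have l2 : ((b:ℝ)-a)*(KK + φ ((b:ℝ)*θ) - φ ((b:ℝ)*θ)) = ((b:ℝ)-a)*KK := by ring
      have l3 : 0 ≤ ((b:ℝ)-a)*KK := mul_nonneg hba.le hK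
      linarith
    rcases le_or_gt (φ ((b : ℝ) * θ)) (φ μ + KK) with hble | hbgt
    · have l1 : ((c:ℝ)-b)*(φ ((b:ℝ)*θ) - (φ μ + KK)) ≤ 0 :=
        mul_nonpos_of_nonneg_of_nonpos hcb (by linarith)
      have l2 : 0 ≤ ((b:ℝ)-a)*(KK + φ ((c:ℝ)*θ) - φ ((b:ℝ)*θ)) :=
        mul_nonneg hba.le (by linarith [hmin ((c:ℝ)*θ)])
      linarith
    · have hsb : sr < (b : ℝ) * θ := by
        rcases eq_or_lt_of_le hb with heq | h'
        · rw [heq] at hs; linarith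
        · exact h'
      have hμb : μ < (b : ℝ) * θ := by
        by_contra hcon
        push_neg at hcon
        have := convex_min_left hφ hmin hsb.le hcon
        linarith
      have hφbc : φ ((b : ℝ) * θ) ≤ φ ((c : ℝ) * θ) :=
        convex_min_right hφ hmin hμb.le hbc'.le
      have hsl := slope2 hφ hsb hgbc
      rw [hs] at hsl
      -- hsl : ((c)θ - (b)θ) * (φ bθ - (φ μ + KK)) ≤ ((b)θ - sr) * (φ cθ - φ bθ)
      have st1 : ((b:ℝ)*θ - sr) * (φ ((c:ℝ)*θ) - φ ((b:ℝ)*θ)) ≤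
          ((b:ℝ)*θ - (a:ℝ)*θ) * (φ ((c:ℝ)*θ) - φ ((b:ℝ)*θ)) :=
        mul_le_mul_of_nonneg_right (by linarith) (by linarith)
      have st2 : ((b:ℝ)*θ - (a:ℝ)*θ) * (φ ((c:ℝ)*θ) - φ ((b:ℝ)*θ)) ≤
          ((b:ℝ)*θ - (a:ℝ)*θ) * (KK + φ ((c:ℝ)*θ) - φ ((b:ℝ)*θ)) :=
        mul_le_mul_of_nonneg_left (by linarith) (by linarith)
      have key : (((c:ℝ)-b) * (φ ((b:ℝ)*θ) - (φ μ + KK))) * θ ≤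
          (((b:ℝ)-a) * (KK + φ ((c:ℝ)*θ) - φ ((b:ℝ)*θ))) * θ := by
        have e1 : (((c:ℝ)-b) * (φ ((b:ℝ)*θ) - (φ μ + KK))) * θ =
            ((c:ℝ)*θ - (b:ℝ)*θ) * (φ ((b:ℝ)*θ) - (φ μ + KK)) := by ring
        have e2 : (((b:ℝ)-a) * (KK + φ ((c:ℝ)*θ) - φ ((b:ℝ)*θ))) * θ =
            ((b:ℝ)*θ - (a:ℝ)*θ) * (KK + φ ((c:ℝ)*θ) - φ ((b:ℝ)*θ)) := by ring
        rw [e1, e2]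
        linarith
      exact le_of_mul_le_mul_right key hθ
  · rw [hv, hv, hv, if_neg (not_lt.2 ha), if_neg (not_lt.2 hb), if_neg (not_lt.2 hc)]
    exact KcOn_of_convex hθ hK hφ a b c hab hbc

lemma quasi_V_base {θ KK : ℝ} (hθ : 0 < θ) (hK : 0 ≤ KK) {φ v : ℝ → ℝ}
    (hφ : ConvexOn ℝ Set.univ φ) (μ sr : ℝ)
    (hmin : ∀ w, φ μ ≤ φ w) (hsμ : sr ≤ μ) (hs : φ sr = φ μ + KK)
    (hv : ∀ x : ℝ, v x = if x < sr then φ μ + KK else φ x) :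
    ∀ a b : ℤ, a ≤ b → v ((a : ℝ) * θ) ≤ v ((b : ℝ) * θ) + KK := by
  have hge : ∀ x : ℝ, φ μ ≤ v x := by
    intro x
    rw [hv]
    split
    · linarith
    · exact hmin x
  intro a b hab
  have hgab : (a : ℝ) * θ ≤ (b : ℝ) * θ := by
    have h1 : (a : ℝ) ≤ b := by exact_mod_cast hab
    nlinarith
  rcases lt_or_ge ((a : ℝ) * θ) sr with ha | ha
  · rw [hv, if_pos ha]
    have := hge ((b : ℝ) * θ)
    linarith
  · rw [hv ((a:ℝ)*θ), if_neg (not_lt.2 ha), hv ((b:ℝ)*θ), if_neg (not_lt.2 (by linarith))]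
    rcases le_or_gt ((a : ℝ) * θ) μ with haμ | haμ
    · have h1 : φ ((a : ℝ) * θ) ≤ φ sr := convex_min_left hφ hmin ha haμ
      have := hmin ((b : ℝ) * θ)
      linarith
    · have := convex_min_right hφ hmin haμ.le hgab
      linarith

set_option maxHeartbeats 2000000 in
theorem stmt5
    (T : ℕ) (hT : 2 ≤ T)
    (α : ℝ) (hα0 : 0 < α) (hα1 : α ≤ 1)
    (K : ℕ → ℝ) (hK0 : ∀ t, t < T → 0 ≤ K t)
    (hKmono : ∀ t, t + 2 ≤ T → α * K (t + 1) ≤ K t)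
    (ν : ℕ → MeasureTheory.Measure ℝ)
    (hprob : ∀ t, MeasureTheory.IsProbabilityMeasure (ν t))
    (hpos : ∀ t, ν t (Set.Iio 0) = 0)
    (F : ℕ → ℝ → ℝ) (hF : ∀ t x, F t x = (ν t (Set.Iic x)).toReal)
    (C : ℕ → ℝ → ℝ)
    (hCconv : ∀ t, t < T → ConvexOn ℝ Set.univ (C t))
    (hCcoer : ∀ t, t < T → Filter.Tendsto (C t) (Filter.cocompact ℝ) Filter.atTop)
    (θ : ℝ) (hθ : 0 < θ)
    (f : ℕ → ℤ → ℝ)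
    (hf : ∀ t (n : ℤ), f t n = F t (((n : ℝ) + 1) * θ) - F t ((n : ℝ) * θ))
    (Cm SU : ℕ → ℝ)
    (hCm : ∀ t, t < T → IsLeast {x | ∀ y, C t x ≤ C t y} (Cm t))
    (hSU : ∀ t, t < T → ∀ n0 : ℤ, (n0 : ℝ) * θ < Cm t → Cm t ≤ ((n0 : ℝ) + 1) * θ →
      IsLeast {w | (∃ m : ℤ, w = (m : ℝ) * θ) ∧ Cm t ≤ w ∧ C t ((n0 : ℝ) * θ) + K t < C t w} (SU t))
    (s S : ℕ → ℝ) (I Ibar : ℕ → ℝ)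
    (hsT1a : s (T - 1) ≤ Cm (T - 1))
    (hsT1b : C (T - 1) (s (T - 1)) = C (T - 1) (Cm (T - 1)) + K (T - 1))
    (hIbarT1 : Ibar (T - 1) = s (T - 1))
    (hI : ∀ t, t + 2 ≤ T →
      IsGreatest {w | (∃ m : ℤ, w = (m : ℝ) * θ) ∧ w < min (Ibar (t + 1) - θ) (Cm t)} (I t))
    (hIbar : ∀ t, t + 2 ≤ T →
      IsGreatest {w | (∃ m : ℤ, w = (m : ℝ) * θ) ∧ w ≤ I t ∧ C t (I t) + K t < C t w} (Ibar t - θ))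
    (H V : ℕ → ℝ → ℝ)
    (hHT1 : ∀ y, H (T - 1) y = C (T - 1) y)
    (hST1 : S (T - 1) = Cm (T - 1))
    (hV : ∀ t, t < T → ∀ y, V t y = if y < s t then H t (S t) + K t else H t y)
    (hHrec : ∀ t, t + 2 ≤ T → ∀ y,
      H t y = C t y + α * ∑' n : ℕ, V (t + 1) (y - ((n : ℝ) - 1) * θ) * f t ((n : ℤ) - 1))
    (hSdef : ∀ t, t + 2 ≤ T →
      IsGreatest {w | (∃ m : ℤ, w = (m : ℝ) * θ) ∧ I t ≤ w ∧ w ≤ SU t ∧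
        ∀ u, (∃ n : ℤ, u = (n : ℝ) * θ) → I t ≤ u → u ≤ SU t → H t w ≤ H t u} (S t))
    (hsdef0 : ∀ t, t + 2 ≤ T → K t = 0 → s t = S t)
    (hsdef1 : ∀ t, t + 2 ≤ T → 0 < K t →
      IsLeast {w | (∃ m : ℤ, w = (m : ℝ) * θ) ∧ Ibar t ≤ w ∧ w ≤ S t ∧ H t w ≤ H t (S t) + K t} (s t))
    :
    ∀ t, t < T → ∀ j : ℤ, H t (S t) ≤ H t ((j : ℝ) * θ) := by
  -- basic facts about F and f
  have hFmono : ∀ t, Monotone (F t) := by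
    intro t x y hxy
    rw [hF, hF]
    haveI := hprob t
    exact ENNReal.toReal_mono (MeasureTheory.measure_ne_top _ _)
      (MeasureTheory.measure_mono (Set.Iic_subset_Iic.2 hxy))
  have hfnn : ∀ t (n : ℤ), 0 ≤ f t n := by
    intro t n
    rw [hf]
    have h1 : (n : ℝ) * θ ≤ ((n : ℝ) + 1) * θ := by nlinarith
    linarith [hFmono t h1]
  have hF0 : ∀ t x, 0 ≤ F t x := by
    intro t x; rw [hF]; exact ENNReal.toReal_nonneg
  have hF1 : ∀ t x, F t x ≤ 1 := by
    intro t x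
    rw [hF]
    haveI := hprob t
    have h1 : ν t (Set.Iic x) ≤ 1 := MeasureTheory.prob_le_one
    have := ENNReal.toReal_mono ENNReal.one_ne_top h1
    simpa using this
  have hsumrange : ∀ t (N : ℕ), ∑ n ∈ Finset.range N, f t ((n : ℤ) - 1)
      = F t (((N : ℝ) - 1) * θ) - F t ((-1 : ℝ) * θ) := by
    intro t N
    induction N with
    | zero => norm_num
    | succ N ih =>
      rw [Finset.sum_range_succ, ih, hf]
      push_cast
      ring_nf
  have hfsummable : ∀ t, Summable (fun n : ℕ => f t ((n : ℤ) - 1)) := by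
    intro t
    apply summable_of_sum_range_le (c := 1) (fun n => hfnn t _)
    intro n
    rw [hsumrange]
    linarith [hF1 t (((n : ℝ) - 1) * θ), hF0 t ((-1 : ℝ) * θ)]
  have hfsum1 : ∀ t, ∑' n : ℕ, f t ((n : ℤ) - 1) ≤ 1 := by
    intro t
    apply Summable.tsum_le_of_sum_range_le (hfsummable t)
    intro n
    rw [hsumrange]
    linarith [hF1 t (((n : ℝ) - 1) * θ), hF0 t ((-1 : ℝ) * θ)]
  have hfsumnn : ∀ t, 0 ≤ ∑' n : ℕ, f t ((n : ℤ) - 1) :=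
    fun t => tsum_nonneg (fun n => hfnn t _)
  have hVsummable : ∀ t, t + 2 ≤ T → ∀ c : ℝ,
      Summable (fun n : ℕ => V (t + 1) (c - ((n : ℝ) - 1) * θ) * f t ((n : ℤ) - 1)) := by
    intro t ht2 c
    obtain ⟨N, hN⟩ := exists_nat_gt ((c + θ - s (t + 1)) / θ)
    have hsmall : ∀ n : ℕ, N ≤ n → c - ((n : ℝ) - 1) * θ < s (t + 1) := by
      intro n hn
      have h1 : (c + θ - s (t + 1)) / θ < (n : ℝ) :=
        lt_of_lt_of_le hN (by exact_mod_cast hn)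
      rw [div_lt_iff₀ hθ] at h1
      nlinarith
    have hterm : ∀ n : ℕ, N ≤ n →
        V (t + 1) (c - ((n : ℝ) - 1) * θ) * f t ((n : ℤ) - 1)
          = (H (t + 1) (S (t + 1)) + K (t + 1)) * f t ((n : ℤ) - 1) := by
      intro n hn
      rw [hV (t + 1) (by omega), if_pos (hsmall n hn)]
    have h1 : Summable (fun n : ℕ => (H (t + 1) (S (t + 1)) + K (t + 1)) * f t ((n : ℤ) - 1)) :=
      (hfsummable t).mul_left _
    have h2 : Summable (fun n : ℕ => V (t + 1) (c - ((n : ℝ) - 1) * θ) * f t ((n : ℤ) - 1)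
        - (H (t + 1) (S (t + 1)) + K (t + 1)) * f t ((n : ℤ) - 1)) := by
      apply summable_of_ne_finset_zero (s := Finset.range N)
      intro n hn
      simp only [Finset.mem_range, not_lt] at hn
      rw [hterm n hn]
      ring
    exact (h1.add h2).congr (fun n => by ring)
  have main : ∀ k t, t + 1 + k = T →
      (∀ j : ℤ, H t (S t) ≤ H t ((j : ℝ) * θ)) ∧ KcOn θ (K t) (V t) ∧
        (∀ a b : ℤ, a ≤ b → V t ((a : ℝ) * θ) ≤ V t ((b : ℝ) * θ) + K t) := by
    intro k
    induction k with
    | zero =>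
      intro t htk
      have htT : t < T := by omega
      have hTt : T - 1 = t := by omega
      have ha := hsT1a; have hb := hsT1b; have hh := hHT1; have hs1 := hST1
      rw [hTt] at ha hb hh hs1
      have hconv := hCconv t htT
      have hmin : ∀ w, C t (Cm t) ≤ C t w := (hCm t htT).1
      have hKt := hK0 t htT
      have hv' : ∀ x : ℝ, V t x = if x < s t then C t (Cm t) + K t else C t x := by
        intro x
        rw [hV t htT x, hh, hh, hs1]
      refine ⟨?_, ?_, ?_⟩
      · intro j
        rw [hh, hh, hs1]
        exact hmin _
      · exact KcOn_V_base hθ hKt hconv (Cm t) (s t) hmin ha hb hv'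
      · exact quasi_V_base hθ hKt hconv (Cm t) (s t) hmin ha hb hv'
    | succ k ih =>
      intro t htk
      have ht2 : t + 2 ≤ T := by omega
      have htT : t < T := by omega
      have huT : t + 1 < T := by omega
      obtain ⟨Au, Vku, Qu⟩ := ih (t + 1) (by omega)
      have hKt := hK0 t htT
      have hKu := hK0 (t + 1) huT
      have hKm := hKmono t ht2
      have hconv := hCconv t htT
      have hmin : ∀ w, C t (Cm t) ≤ C t w := (hCm t htT).1
      -- I t facts
      obtain ⟨⟨⟨iidx, hiidx⟩, hIlt⟩, hIub⟩ := hI t ht2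
      rw [lt_min_iff] at hIlt
      obtain ⟨hIlt1, hIlt2⟩ := hIlt
      -- Ibar (t+1) ≤ s (t+1)
      have hIbar_le_s : Ibar (t + 1) ≤ s (t + 1) := by
        by_cases h3 : t + 3 ≤ T
        · by_cases hKz : K (t + 1) = 0
          · rw [hsdef0 (t + 1) h3 hKz]
            obtain ⟨⟨⟨m1, hm1⟩, hle1, hC1⟩, _⟩ := hIbar (t + 1) h3
            obtain ⟨⟨⟨m2, hm2⟩, _⟩, _⟩ := hI (t + 1) h3
            obtain ⟨⟨_, hIS', _, _⟩, _⟩ := hSdef (t + 1) h3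
            have hne : Ibar (t + 1) - θ ≠ I (t + 1) := by
              intro he
              rw [he] at hC1
              linarith
            have hm12 : m1 < m2 := by
              have h1 : (m1 : ℝ) * θ ≤ (m2 : ℝ) * θ := by rw [← hm1, ← hm2]; exact hle1
              have h2 : (m1 : ℝ) ≤ m2 := le_of_mul_le_mul_right (by linarith) hθ
              have h4 : m1 ≤ m2 := by exact_mod_cast h2
              rcases eq_or_lt_of_le h4 with rfl | h5
              · exact absurd (hm1.trans hm2.symm) hne
              · exact h5
            have h6 : Ibar (t + 1) ≤ I (t + 1) := by
              have h7 : ((m1 : ℝ) + 1) * θ ≤ (m2 : ℝ) * θ := by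
                have : (m1 : ℝ) + 1 ≤ m2 := by exact_mod_cast hm12
                nlinarith
              rw [hm2]
              linarith [hm1 ▸ (by linarith [h7] : Ibar (t + 1) ≤ (m1 : ℝ) * θ + θ)]
            linarith [hIS']
          · have hKpos : 0 < K (t + 1) := lt_of_le_of_ne hKu (Ne.symm hKz)
            exact (hsdef1 (t + 1) h3 hKpos).1.2.1
        · have hTu : T - 1 = t + 1 := by omega
          have e := hIbarT1
          rw [hTu] at e
          exact e.le
      have hIs : I t + θ < s (t + 1) := by linarith
      -- SU facts
      have hx : (Cm t / θ) * θ = Cm t := div_mul_cancel₀ _ hθ.ne'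
      have hn0a : ((⌈Cm t / θ⌉ - 1 : ℤ) : ℝ) * θ < Cm t := by
        push_cast
        have h1 : (⌈Cm t / θ⌉ : ℝ) - 1 < Cm t / θ := by
          linarith [Int.ceil_lt_add_one (Cm t / θ)]
        nlinarith
      have hn0b : Cm t ≤ (((⌈Cm t / θ⌉ - 1 : ℤ) : ℝ) + 1) * θ := by
        push_cast
        have h1 : Cm t / θ ≤ (⌈Cm t / θ⌉ : ℝ) := Int.le_ceil _
        nlinarith
      set n0 : ℤ := ⌈Cm t / θ⌉ - 1 with hn0def
      obtain ⟨⟨⟨mU, hmU⟩, hCmSU, hCSU⟩, _⟩ := hSU t htT n0 hn0a hn0b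
      have hIlen0 : I t ≤ (n0 : ℝ) * θ := by
        have h1 : (iidx : ℝ) * θ < ((n0 : ℝ) + 1) * θ := by
          rw [← hiidx]; linarith
        have h2 : (iidx : ℝ) < (n0 : ℝ) + 1 := lt_of_mul_lt_mul_right h1 hθ.le
        have h3 : iidx ≤ n0 := by
          have : (iidx : ℝ) < ((n0 + 1 : ℤ) : ℝ) := by push_cast; linarith
          have h4 : iidx < n0 + 1 := by exact_mod_cast this
          omega
        rw [hiidx]
        have : (iidx : ℝ) ≤ n0 := by exact_mod_cast h3
        nlinarith
      have hn0SU : ((n0 : ℝ) + 1) * θ ≤ SU t := by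
        have h1 : (n0 : ℝ) * θ < (mU : ℝ) * θ := by rw [← hmU]; linarith
        have h2 : (n0 : ℝ) < mU := lt_of_mul_lt_mul_right h1 hθ.le
        have h3 : n0 + 1 ≤ mU := by
          have h4 : n0 < mU := by exact_mod_cast h2
          omega
        rw [hmU]
        have : (n0 : ℝ) + 1 ≤ (mU : ℝ) := by exact_mod_cast h3
        nlinarith
      have hISU : I t ≤ SU t := le_trans hIlen0 (by nlinarith)
      obtain ⟨m0, hm0a, hm0I, hm0SU⟩ : ∃ m0 : ℤ, C t ((m0 : ℝ) * θ) ≤ C t ((n0 : ℝ) * θ) ∧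
          I t ≤ (m0 : ℝ) * θ ∧ (m0 : ℝ) * θ ≤ SU t := by
        rcases le_or_gt (C t ((n0 : ℝ) * θ)) (C t (((n0 : ℝ) + 1) * θ)) with h | h
        · exact ⟨n0, le_refl _, hIlen0, by nlinarith⟩
        · refine ⟨n0 + 1, ?_, ?_, ?_⟩
          · push_cast; linarith
          · push_cast; linarith [hIlen0, hθ]
          · push_cast; linarith
      obtain ⟨⟨⟨mS, hmS⟩, hIS, hSSU, hSmin⟩, _⟩ := hSdef t ht2
      -- the global minimality at level t
      have At : ∀ j : ℤ, H t (S t) ≤ H t ((j : ℝ) * θ) := by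
        intro j
        rcases lt_or_ge ((j : ℝ) * θ) (I t) with hj | hj
        · -- left of I t
          have hconst : ∀ x : ℝ, x ≤ I t → H t x = C t x +
              α * ∑' n : ℕ, (H (t + 1) (S (t + 1)) + K (t + 1)) * f t ((n : ℤ) - 1) := by
            intro x hx
            rw [hHrec t ht2]
            congr 2
            apply tsum_congr
            intro n
            congr 1
            rw [hV (t + 1) huT]
            rw [if_pos ?_]
            have h1 : (0 : ℝ) ≤ (n : ℝ) := Nat.cast_nonneg n
            nlinarith
          have h1 : H t (S t) ≤ H t (I t) := hSmin (I t) ⟨iidx, hiidx⟩ le_rfl hISU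
          have h2 : C t (I t) ≤ C t ((j : ℝ) * θ) :=
            convex_min_left hconv hmin hj.le hIlt2.le
          rw [hconst (I t) le_rfl] at h1
          rw [hconst ((j : ℝ) * θ) hj.le]
          linarith
        rcases le_or_gt ((j : ℝ) * θ) (SU t) with hj2 | hj2
        · exact hSmin _ ⟨j, rfl⟩ hj hj2
        · -- right of SU t
          have hjm0 : m0 ≤ j := by
            have h1 : (m0 : ℝ) * θ < (j : ℝ) * θ := by linarith
            have h2 : (m0 : ℝ) < j := lt_of_mul_lt_mul_right h1 hθ.le
            have h3 : m0 < j := by exact_mod_cast h2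
            omega
          have hs1 := hVsummable t ht2 ((m0 : ℝ) * θ)
          have hs2 := hVsummable t ht2 ((j : ℝ) * θ)
          have hsK : Summable (fun n : ℕ => K (t + 1) * f t ((n : ℤ) - 1)) :=
            (hfsummable t).mul_left _
          have hterm : ∀ n : ℕ,
              V (t + 1) ((m0 : ℝ) * θ - ((n : ℝ) - 1) * θ) * f t ((n : ℤ) - 1) ≤
              K (t + 1) * f t ((n : ℤ) - 1) +
                V (t + 1) ((j : ℝ) * θ - ((n : ℝ) - 1) * θ) * f t ((n : ℤ) - 1) := by
            intro n
            have hq := Qu (m0 - ((n : ℤ) - 1)) (j - ((n : ℤ) - 1)) (by omega)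
            have e1 : ((m0 - ((n : ℤ) - 1) : ℤ) : ℝ) * θ = (m0 : ℝ) * θ - ((n : ℝ) - 1) * θ := by
              push_cast; ring
            have e2 : ((j - ((n : ℤ) - 1) : ℤ) : ℝ) * θ = (j : ℝ) * θ - ((n : ℝ) - 1) * θ := by
              push_cast; ring
            rw [e1, e2] at hq
            have hf0 := hfnn t ((n : ℤ) - 1)
            have h5 := mul_le_mul_of_nonneg_right hq hf0
            nlinarith [h5]
          have hsum_le := Summable.tsum_le_tsum hterm hs1 (hsK.add hs2)
          rw [Summable.tsum_add hsK hs2, tsum_mul_left] at hsum_le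
          have hc1 : C t (SU t) ≤ C t ((j : ℝ) * θ) :=
            convex_min_right hconv hmin hCmSU hj2.le
          have hc2 : C t ((m0 : ℝ) * θ) + K t < C t (SU t) := by linarith
          have hαK : α * (K (t + 1) * ∑' n : ℕ, f t ((n : ℤ) - 1)) ≤ K t := by
            have h6 : K (t + 1) * ∑' n : ℕ, f t ((n : ℤ) - 1) ≤ K (t + 1) * 1 :=
              mul_le_mul_of_nonneg_left (hfsum1 t) hKu
            have h7 : α * (K (t + 1) * ∑' n : ℕ, f t ((n : ℤ) - 1)) ≤ α * (K (t + 1) * 1) :=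
              mul_le_mul_of_nonneg_left h6 hα0.le
            calc α * (K (t + 1) * ∑' n : ℕ, f t ((n : ℤ) - 1)) ≤ α * (K (t + 1) * 1) := h7
              _ = α * K (t + 1) := by ring
              _ ≤ K t := hKm
          have hfinal : H t ((m0 : ℝ) * θ) ≤ H t ((j : ℝ) * θ) := by
            rw [hHrec t ht2, hHrec t ht2]
            have h8 := mul_le_mul_of_nonneg_left hsum_le hα0.le
            have e3 : α * (K (t + 1) * (∑' n : ℕ, f t ((n : ℤ) - 1)) +
                ∑' n : ℕ, V (t + 1) ((j : ℝ) * θ - ((n : ℝ) - 1) * θ) * f t ((n : ℤ) - 1)) =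
                α * (K (t + 1) * ∑' n : ℕ, f t ((n : ℤ) - 1)) +
                α * ∑' n : ℕ, V (t + 1) ((j : ℝ) * θ - ((n : ℝ) - 1) * θ) * f t ((n : ℤ) - 1) := by
              ring
            rw [e3] at h8
            linarith
          exact le_trans (hSmin _ ⟨m0, rfl⟩ hm0I hm0SU) hfinal
      -- normalized K-convexity of V (t+1)
      have Vku' : ∀ a' b' c' : ℤ, a' < b' → b' ≤ c' → ∀ n : ℕ,
          ((c' : ℝ) - b') * (V (t + 1) ((b' : ℝ) * θ - ((n : ℝ) - 1) * θ)
            - V (t + 1) ((a' : ℝ) * θ - ((n : ℝ) - 1) * θ)) ≤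
          ((b' : ℝ) - a') * (K (t + 1) + V (t + 1) ((c' : ℝ) * θ - ((n : ℝ) - 1) * θ)
            - V (t + 1) ((b' : ℝ) * θ - ((n : ℝ) - 1) * θ)) := by
        intro a' b' c' h1 h2 n
        have hq := Vku (a' - ((n : ℤ) - 1)) (b' - ((n : ℤ) - 1)) (c' - ((n : ℤ) - 1))
          (by omega) (by omega)
        have e1 : ((a' - ((n : ℤ) - 1) : ℤ) : ℝ) * θ = (a' : ℝ) * θ - ((n : ℝ) - 1) * θ := by
          push_cast; ring
        have e2 : ((b' - ((n : ℤ) - 1) : ℤ) : ℝ) * θ = (b' : ℝ) * θ - ((n : ℝ) - 1) * θ := by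
          push_cast; ring
        have e3 : ((c' - ((n : ℤ) - 1) : ℤ) : ℝ) * θ = (c' : ℝ) * θ - ((n : ℝ) - 1) * θ := by
          push_cast; ring
        have e4 : ((c' - ((n : ℤ) - 1) : ℤ) : ℝ) - ((b' - ((n : ℤ) - 1) : ℤ) : ℝ)
            = (c' : ℝ) - b' := by push_cast; ring
        have e5 : ((b' - ((n : ℤ) - 1) : ℤ) : ℝ) - ((a' - ((n : ℤ) - 1) : ℤ) : ℝ)
            = (b' : ℝ) - a' := by push_cast; ring
        rw [e1, e2, e3, e4, e5] at hq
        exact hq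
      -- K-convexity of H t on the grid
      have Hk : KcOn θ (K t) (H t) := by
        intro a b c hab hbc
        have hba : (0 : ℝ) ≤ (b : ℝ) - a := by
          have h1 : (a : ℝ) < b := by exact_mod_cast hab
          linarith
        have hcb : (0 : ℝ) ≤ (c : ℝ) - b := by
          have h1 : (b : ℝ) ≤ c := by exact_mod_cast hbc
          linarith
        have hsa := hVsummable t ht2 ((a : ℝ) * θ)
        have hsb := hVsummable t ht2 ((b : ℝ) * θ)
        have hsc := hVsummable t ht2 ((c : ℝ) * θ)
        have hsK : Summable (fun n : ℕ => K (t + 1) * f t ((n : ℤ) - 1)) :=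
          (hfsummable t).mul_left _
        have hterm : ∀ n : ℕ,
            ((c : ℝ) - a) * (V (t + 1) ((b : ℝ) * θ - ((n : ℝ) - 1) * θ) * f t ((n : ℤ) - 1)) ≤
            ((c : ℝ) - b) * (V (t + 1) ((a : ℝ) * θ - ((n : ℝ) - 1) * θ) * f t ((n : ℤ) - 1)) +
            ((b : ℝ) - a) * (K (t + 1) * f t ((n : ℤ) - 1)) +
            ((b : ℝ) - a) * (V (t + 1) ((c : ℝ) * θ - ((n : ℝ) - 1) * θ) * f t ((n : ℤ) - 1)) := by
          intro n
          have hq := Vku' a b c hab hbc n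
          have h5 := mul_le_mul_of_nonneg_right hq (hfnn t ((n : ℤ) - 1))
          nlinarith [h5]
        have hsum_le := Summable.tsum_le_tsum hterm (hsb.mul_left _)
          (((hsa.mul_left _).add (hsK.mul_left _)).add (hsc.mul_left _))
        rw [Summable.tsum_add ((hsa.mul_left _).add (hsK.mul_left _)) (hsc.mul_left _),
          Summable.tsum_add (hsa.mul_left _) (hsK.mul_left _)] at hsum_le
        simp only [tsum_mul_left] at hsum_le
        have hC0 := KcOn_of_convex hθ (le_refl (0 : ℝ)) hconv a b c hab hbc
        have hαK : α * (K (t + 1) * ∑' n : ℕ, f t ((n : ℤ) - 1)) ≤ K t := by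
          have h6 : K (t + 1) * ∑' n : ℕ, f t ((n : ℤ) - 1) ≤ K (t + 1) * 1 :=
            mul_le_mul_of_nonneg_left (hfsum1 t) hKu
          have h7 : α * (K (t + 1) * ∑' n : ℕ, f t ((n : ℤ) - 1)) ≤ α * (K (t + 1) * 1) :=
            mul_le_mul_of_nonneg_left h6 hα0.le
          calc α * (K (t + 1) * ∑' n : ℕ, f t ((n : ℤ) - 1)) ≤ α * (K (t + 1) * 1) := h7
            _ = α * K (t + 1) := by ring
            _ ≤ K t := hKm
        have h8 := mul_le_mul_of_nonneg_left hsum_le hα0.le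
        have h9 := mul_le_mul_of_nonneg_left hαK hba
        rw [hHrec t ht2, hHrec t ht2, hHrec t ht2]
        nlinarith [h8, h9, hC0]
      -- grid representation of s t / S t
      obtain ⟨sidx, hsidx, hsle, hsPle⟩ : ∃ m : ℤ, s t = (m : ℝ) * θ ∧
          (m : ℝ) * θ ≤ (mS : ℝ) * θ ∧ H t (s t) ≤ H t (S t) + K t := by
        by_cases hKz : K t = 0
        · refine ⟨mS, ?_, le_refl _, ?_⟩
          · rw [hsdef0 t ht2 hKz, hmS]
          · rw [hsdef0 t ht2 hKz, hKz]
            linarith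
        · have hKpos : 0 < K t := lt_of_le_of_ne hKt (Ne.symm hKz)
          obtain ⟨⟨⟨ms, hms⟩, _, hsS', hsP'⟩, _⟩ := hsdef1 t ht2 hKpos
          refine ⟨ms, hms, ?_, hsP'⟩
          rw [← hms, ← hmS]
          exact hsS'
      have hsleZ : sidx ≤ mS := by
        have h1 : (sidx : ℝ) ≤ mS := le_of_mul_le_mul_right (by linarith) hθ
        exact_mod_cast h1
      have hminS : ∀ j : ℤ, H t ((mS : ℝ) * θ) ≤ H t ((j : ℝ) * θ) := by
        intro j
        rw [← hmS]
        exact At j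
      have hsPle' : H t ((sidx : ℝ) * θ) ≤ H t ((mS : ℝ) * θ) + K t := by
        rw [← hsidx, ← hmS]
        exact hsPle
      have hv' : ∀ j : ℤ, V t ((j : ℝ) * θ) =
          if (j : ℝ) * θ < (sidx : ℝ) * θ then H t ((mS : ℝ) * θ) + K t
          else H t ((j : ℝ) * θ) := by
        intro j
        rw [hV t htT, hsidx, hmS]
      exact ⟨At, KcOn_V hθ hKt Hk sidx mS hsleZ hminS hsPle' hv',
        quasi_V hθ hKt Hk sidx mS hsleZ hminS hsPle' hv'⟩
  intro t htT j
  exact (main (T - (t + 1)) t (by omega)).1 j
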